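/- The correspondence f ↦ f^t is an isometric isomorphism from HL₀(B_X, Y) onto the space of weak*-to-weak* continuous linear operators from Y* into HL₀(B_X), where HL₀(B_X) carries the weak* topology induced by its predual G₀(B_X). -/

import Mathlib

open Metric Set Filter Topology

noncomputable section

universe u

def LipImage {X Y : Type*} [NormedAddCommGroup X] [NormedSpace ℂ X]
    [NormedAddCommGroup Y] [NormedSpace ℂ Y] (f : X → Y) : Set Y :=
  {v | ∃ x ∈ ball (0 : X) 1, ∃ y ∈ ball (0 : X) 1, x ≠ y ∧ v = ‖x - y‖⁻¹ • (f x - f y)}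

def MemHL {X Y : Type*} [NormedAddCommGroup X] [NormedSpace ℂ X]
    [NormedAddCommGroup Y] [NormedSpace ℂ Y] (f : X → Y) : Prop :=
  f 0 = 0 ∧ DifferentiableOn ℂ f (ball (0 : X) 1) ∧
    ∃ C : ℝ, ∀ x ∈ ball (0 : X) 1, ∀ y ∈ ball (0 : X) 1, ‖f x - f y‖ ≤ C * ‖x - y‖

def LipNorm {X Y : Type*} [NormedAddCommGroup X] [NormedSpace ℂ X]
    [NormedAddCommGroup Y] [NormedSpace ℂ Y] (f : X → Y) : ℝ :=
  sSup ((fun p : X × X => ‖f p.1 - f p.2‖ / ‖p.1 - p.2‖) ''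
    {p : X × X | p.1 ∈ ball (0 : X) 1 ∧ p.2 ∈ ball (0 : X) 1 ∧ p.1 ≠ p.2})

/-- An element of the dual, regarded in the weak* dual. -/
def toWD {E : Type*} [NormedAddCommGroup E] [NormedSpace ℂ E] (u : E →L[ℂ] ℂ) :
    WeakDual ℂ E := u



section auxiliaries

variable {X Y : Type*} [NormedAddCommGroup X] [NormedSpace ℂ X]
  [NormedAddCommGroup Y] [NormedSpace ℂ Y]


variable {X Y : Type*} [NormedAddCommGroup X] [NormedSpace ℂ X]
  [NormedAddCommGroup Y] [NormedSpace ℂ Y]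

lemma lipNorm_nonneg (f : X → Y) : 0 ≤ LipNorm f := by
  apply Real.sSup_nonneg
  rintro r ⟨p, -, rfl⟩
  positivity

lemma lipNorm_bddAbove {f : X → Y} (hf : MemHL f) :
    BddAbove ((fun p : X × X => ‖f p.1 - f p.2‖ / ‖p.1 - p.2‖) ''
      {p : X × X | p.1 ∈ ball (0 : X) 1 ∧ p.2 ∈ ball (0 : X) 1 ∧ p.1 ≠ p.2}) := by
  obtain ⟨C, hC⟩ := hf.2.2
  refine ⟨max C 0, ?_⟩
  rintro r ⟨p, ⟨h1, h2, h3⟩, rfl⟩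
  have hpos : (0:ℝ) < ‖p.1 - p.2‖ := by
    rw [norm_pos_iff, sub_ne_zero]; exact h3
  refine le_max_of_le_left ?_
  rw [div_le_iff₀ hpos]
  exact hC _ h1 _ h2

lemma ratio_le_lipNorm {f : X → Y} (hf : MemHL f) {x y : X} (hx : x ∈ ball (0 : X) 1)
    (hy : y ∈ ball (0 : X) 1) (hxy : x ≠ y) : ‖f x - f y‖ / ‖x - y‖ ≤ LipNorm f :=
  le_csSup (lipNorm_bddAbove hf) ⟨(x, y), ⟨hx, hy, hxy⟩, rfl⟩

lemma norm_sub_le_lipNorm {f : X → Y} (hf : MemHL f) {x y : X} (hx : x ∈ ball (0 : X) 1)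
    (hy : y ∈ ball (0 : X) 1) : ‖f x - f y‖ ≤ LipNorm f * ‖x - y‖ := by
  rcases eq_or_ne x y with rfl | hxy
  · simp
  · have hpos : (0:ℝ) < ‖x - y‖ := by rw [norm_pos_iff, sub_ne_zero]; exact hxy
    rw [← div_le_iff₀ hpos]
    exact ratio_le_lipNorm hf hx hy hxy

lemma lipNorm_le {f : X → Y} {C : ℝ} (h0 : 0 ≤ C)
    (h : ∀ x ∈ ball (0 : X) 1, ∀ y ∈ ball (0 : X) 1, ‖f x - f y‖ ≤ C * ‖x - y‖) :
    LipNorm f ≤ C := by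
  apply Real.sSup_le _ h0
  rintro r ⟨p, ⟨h1, h2, h3⟩, rfl⟩
  have hpos : (0:ℝ) < ‖p.1 - p.2‖ := by rw [norm_pos_iff, sub_ne_zero]; exact h3
  rw [div_le_iff₀ hpos]
  exact h _ h1 _ h2

lemma memHL_comp_clm {f : X → Y} (hf : MemHL f) (φ : Y →L[ℂ] ℂ) :
    MemHL (fun x => φ (f x)) := by
  obtain ⟨h0, hd, C, hC⟩ := hf
  refine ⟨by simp [h0], ?_, ‖φ‖ * C, ?_⟩
  · exact φ.differentiable.comp_differentiableOn hd
  · intro x hx y hy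
    calc ‖φ (f x) - φ (f y)‖ = ‖φ (f x - f y)‖ := by rw [map_sub]
    _ ≤ ‖φ‖ * ‖f x - f y‖ := φ.le_opNorm _
    _ ≤ ‖φ‖ * (C * ‖x - y‖) := by
        exact mul_le_mul_of_nonneg_left (hC _ hx _ hy) (norm_nonneg _)
    _ = ‖φ‖ * C * ‖x - y‖ := by ring

lemma lipNorm_comp_le {f : X → Y} (hf : MemHL f) (φ : Y →L[ℂ] ℂ) :
    LipNorm (fun x => φ (f x)) ≤ ‖φ‖ * LipNorm f := by
  apply lipNorm_le (mul_nonneg (norm_nonneg _) (lipNorm_nonneg f))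
  intro x hx y hy
  calc ‖φ (f x) - φ (f y)‖ = ‖φ (f x - f y)‖ := by rw [map_sub]
  _ ≤ ‖φ‖ * ‖f x - f y‖ := φ.le_opNorm _
  _ ≤ ‖φ‖ * (LipNorm f * ‖x - y‖) :=
      mul_le_mul_of_nonneg_left (norm_sub_le_lipNorm hf hx hy) (norm_nonneg _)
  _ = ‖φ‖ * LipNorm f * ‖x - y‖ := by ring


end auxiliaries

lemma dual_of_weakdual {Y : Type*} [NormedAddCommGroup Y] [NormedSpace ℂ Y]
    (l : (Y →L[ℂ] ℂ) →ₗ[ℂ] ℂ) (hc : Continuous fun φ : WeakDual ℂ Y => l φ) :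
    ∃ y : Y, ∀ φ : Y →L[ℂ] ℂ, l φ = φ y := by
  -- preimage of unit ball is a neighborhood of 0 in the weak* topology
  have h0 : l (0 : WeakDual ℂ Y) = 0 := map_zero l
  have hmem : (fun φ : WeakDual ℂ Y => l φ) ⁻¹' ball (0:ℂ) 1 ∈ 𝓝 (0 : WeakDual ℂ Y) := by
    have := hc.continuousAt (x := (0 : WeakDual ℂ Y))
    have hb : ball (0:ℂ) 1 ∈ 𝓝 (l (0 : WeakDual ℂ Y)) := by
      rw [h0]; exact ball_mem_nhds _ one_pos
    exact this.preimage_mem_nhds hb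
  -- unfold the induced topology
  erw [nhds_induced (fun (φ : WeakDual ℂ Y) (y : Y) => topDualPairing ℂ Y φ y), Filter.mem_comap]
    at hmem
  obtain ⟨U, hU, hUsub⟩ := hmem
  have h0pi : (fun y : Y => topDualPairing ℂ Y (0 : WeakDual ℂ Y) y) = (0 : Y → ℂ) := by
    funext y; rfl
  rw [h0pi, nhds_pi] at hU
  obtain ⟨I, hIfin, V, hV, hVsub⟩ := Filter.mem_pi.mp hU
  -- kernel containment
  have hker : ∀ φ : Y →L[ℂ] ℂ, (∀ y ∈ I, φ y = 0) → l φ = 0 := by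
    intro φ hφ
    by_contra hne
    set t : ℂ := 2 * (l φ)⁻¹ with ht
    have hmemU : (fun y : Y => topDualPairing ℂ Y (t • φ) y) ∈ U := by
      apply hVsub
      intro y hy
      have hz : topDualPairing ℂ Y (t • φ) y = 0 := by
        simp [topDualPairing_apply, hφ y hy]
      show topDualPairing ℂ Y (t • φ) y ∈ V y
      rw [hz]
      exact mem_of_mem_nhds (hV y)
    have : (t • φ : WeakDual ℂ Y) ∈ (fun φ : WeakDual ℂ Y => l φ) ⁻¹' ball (0:ℂ) 1 :=
      hUsub hmemU
    have h2 : l (t • φ) = 2 := by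
      rw [map_smul, ht, smul_eq_mul]
      field_simp
    change dist (l (t • φ)) 0 < 1 at this
    rw [h2] at this
    norm_num at this
  -- finite-dimensional duality
  haveI : Fintype ↥I := hIfin.fintype
  set L : ↥I → ((Y →L[ℂ] ℂ) →ₗ[ℂ] ℂ) := fun y => (topDualPairing ℂ Y).flip (y : Y) with hL
  have hkle : ⨅ i, LinearMap.ker (L i) ≤ LinearMap.ker l := by
    intro φ hφ
    rw [Submodule.mem_iInf] at hφ
    rw [LinearMap.mem_ker]
    apply hker
    intro y hy
    exact hφ ⟨y, hy⟩
  have hspan := mem_span_of_iInf_ker_le_ker hkle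
  obtain ⟨c, hcs⟩ := (Submodule.mem_span_range_iff_exists_fun ℂ).1 hspan
  refine ⟨∑ i, c i • (i : Y), ?_⟩
  intro φ
  rw [← hcs]
  simp only [LinearMap.coe_sum, Finset.sum_apply, LinearMap.smul_apply, map_sum, map_smul,
    hL, LinearMap.flip_apply, topDualPairing_apply, smul_eq_mul]

lemma keyA {X Y G : Type*}
    [NormedAddCommGroup X] [NormedSpace ℂ X]
    [NormedAddCommGroup Y] [NormedSpace ℂ Y] [CompleteSpace Y]
    [NormedAddCommGroup G] [NormedSpace ℂ G]
    (δX : X → G)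
    (hdense : Dense (Submodule.span ℂ (δX '' ball (0 : X) 1) : Set G))
    (linC : (X → ℂ) → (G →L[ℂ] ℂ))
    (hlinC : ∀ g : X → ℂ, MemHL g → ∀ x ∈ ball (0 : X) 1, linC g (δX x) = g x)
    (hlinCnorm : ∀ g : X → ℂ, MemHL g → ‖linC g‖ = LipNorm g)
    (f : X → Y) (hf : MemHL f) :
    ∀ v : G, ∃ y : Y, ∀ φ : Y →L[ℂ] ℂ, linC (fun x => φ (f x)) v = φ y := by
  have hadd : ∀ φ ψ : Y →L[ℂ] ℂ, linC (fun x => (φ + ψ) (f x)) =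
      linC (fun x => φ (f x)) + linC (fun x => ψ (f x)) := by
    intro φ ψ
    apply ContinuousLinearMap.ext_on hdense
    rintro v ⟨x, hx, rfl⟩
    rw [hlinC _ (memHL_comp_clm hf (φ + ψ)) x hx]
    simp [hlinC _ (memHL_comp_clm hf φ) x hx, hlinC _ (memHL_comp_clm hf ψ) x hx]
  have hsmul : ∀ (a : ℂ) (φ : Y →L[ℂ] ℂ), linC (fun x => (a • φ) (f x)) =
      a • linC (fun x => φ (f x)) := by
    intro a φ
    apply ContinuousLinearMap.ext_on hdense
    rintro v ⟨x, hx, rfl⟩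
    rw [hlinC _ (memHL_comp_clm hf (a • φ)) x hx]
    simp [hlinC _ (memHL_comp_clm hf φ) x hx]
  set F0 : (Y →L[ℂ] ℂ) →ₗ[ℂ] (G →L[ℂ] ℂ) :=
    { toFun := fun φ => linC (fun x => φ (f x)),
      map_add' := hadd, map_smul' := hsmul } with hF0
  have hbound : ∀ φ : Y →L[ℂ] ℂ, ‖F0 φ‖ ≤ LipNorm f * ‖φ‖ := by
    intro φ
    show ‖linC (fun x => φ (f x))‖ ≤ _
    rw [hlinCnorm _ (memHL_comp_clm hf φ)]
    calc LipNorm (fun x => φ (f x)) ≤ ‖φ‖ * LipNorm f := lipNorm_comp_le hf φ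
    _ = LipNorm f * ‖φ‖ := mul_comm _ _
  set F : (Y →L[ℂ] ℂ) →L[ℂ] (G →L[ℂ] ℂ) := F0.mkContinuous (LipNorm f) hbound with hF
  have hFapp : ∀ φ : Y →L[ℂ] ℂ, F φ = linC (fun x => φ (f x)) := fun φ => rfl
  set J := NormedSpace.inclusionInDoubleDualLi ℂ (E := Y) with hJ
  have hJclosed : IsClosed (Set.range (J : Y → StrongDual ℂ (StrongDual ℂ Y))) :=
    (J.isometry.isUniformInducing.isComplete_range).isClosed
  set M : Submodule ℂ G :=
    Submodule.comap (F.flip : G →ₗ[ℂ] ((Y →L[ℂ] ℂ) →L[ℂ] ℂ)) (LinearMap.range J.toLinearMap)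
    with hM
  have hMclosed : IsClosed (M : Set G) := by
    have : (M : Set G) = F.flip ⁻¹' (Set.range (J : Y → _)) := by
      ext v
      simp [hM, LinearMap.mem_range, Set.mem_preimage, Set.mem_range]
    rw [this]
    exact hJclosed.preimage F.flip.continuous
  have himg : δX '' ball (0 : X) 1 ⊆ (M : Set G) := by
    rintro _ ⟨x, hx, rfl⟩
    refine ⟨f x, ?_⟩
    apply ContinuousLinearMap.ext
    intro φ
    show φ (f x) = F φ (δX x)
    rw [hFapp, hlinC _ (memHL_comp_clm hf φ) x hx]
  have hspanle : (Submodule.span ℂ (δX '' ball (0 : X) 1) : Set G) ⊆ (M : Set G) := by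
    exact_mod_cast Submodule.span_le.mpr himg
  have hall : ∀ v : G, v ∈ M := by
    intro v
    have h1 : v ∈ closure (Submodule.span ℂ (δX '' ball (0 : X) 1) : Set G) := hdense v
    have h2 : v ∈ closure (M : Set G) := closure_mono hspanle h1
    rwa [hMclosed.closure_eq] at h2
  intro v
  obtain ⟨y, hy⟩ := hall v
  refine ⟨y, fun φ => ?_⟩
  have : J y φ = F.flip v φ := congrArg (fun w : (Y →L[ℂ] ℂ) →L[ℂ] ℂ => w φ) hy
  rw [← hFapp φ]
  calc F φ v = F.flip v φ := rfl
  _ = J y φ := this.symm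
  _ = φ y := rfl

lemma keyS {Y G : Type*} [NormedAddCommGroup Y] [NormedSpace ℂ Y]
    [NormedAddCommGroup G] [NormedSpace ℂ G]
    (u : (Y →L[ℂ] ℂ) →ₗ[ℂ] (G →L[ℂ] ℂ))
    (hu : Continuous fun φ : WeakDual ℂ Y => toWD (u (φ : Y →L[ℂ] ℂ))) :
    ∃ S : G →L[ℂ] Y, ∀ (v : G) (φ : Y →L[ℂ] ℂ), φ (S v) = u φ v := by
  have hex : ∀ v : G, ∃ y : Y, ∀ φ : Y →L[ℂ] ℂ, u φ v = φ y := by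
    intro v
    set l : (Y →L[ℂ] ℂ) →ₗ[ℂ] ℂ :=
      { toFun := fun φ => u φ v,
        map_add' := fun φ ψ => by simp,
        map_smul' := fun c φ => by simp } with hl
    have hcont : Continuous fun φ : WeakDual ℂ Y => l φ := by
      have h1 : Continuous fun ψ : WeakDual ℂ G => ψ v := WeakDual.eval_continuous v
      exact h1.comp hu
    exact dual_of_weakdual l hcont
  choose S0 hS0 using hex
  have huniq : ∀ y z : Y, (∀ φ : Y →L[ℂ] ℂ, φ y = φ z) → y = z := by
    intro y z h
    have : ∀ φ : StrongDual ℂ Y, φ (y - z) = 0 := by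
      intro φ; rw [map_sub, h φ, sub_self]
    have := NormedSpace.eq_zero_of_forall_dual_eq_zero ℂ this
    rwa [sub_eq_zero] at this
  set S1 : G →ₗ[ℂ] Y :=
    { toFun := S0,
      map_add' := fun v w => by
        apply huniq
        intro φ
        rw [← hS0 (v + w) φ, map_add, map_add, hS0 v φ, hS0 w φ]
      map_smul' := fun c v => by
        apply huniq
        intro φ
        rw [RingHom.id_apply, map_smul, ← hS0 (c • v) φ, map_smul, smul_eq_mul, smul_eq_mul,
          hS0 v φ] } with hS1
  -- Banach–Steinhaus to get a bound
  set g : {v : G // ‖v‖ ≤ 1} → ((Y →L[ℂ] ℂ) →L[ℂ] ℂ) :=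
    fun i => NormedSpace.inclusionInDoubleDual ℂ Y (S0 i.1) with hg
  have hpt : ∀ φ : Y →L[ℂ] ℂ, ∃ C, ∀ i, ‖g i φ‖ ≤ C := by
    intro φ
    refine ⟨‖u φ‖, fun i => ?_⟩
    have : g i φ = u φ i.1 := by
      simp only [hg, NormedSpace.dual_def]
      exact (hS0 i.1 φ).symm
    rw [this]
    calc ‖u φ i.1‖ ≤ ‖u φ‖ * ‖i.1‖ := (u φ).le_opNorm _
    _ ≤ ‖u φ‖ * 1 := mul_le_mul_of_nonneg_left i.2 (norm_nonneg _)
    _ = ‖u φ‖ := mul_one _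
  obtain ⟨C, hC⟩ := banach_steinhaus hpt
  have hnorm : ∀ v : G, ‖v‖ ≤ 1 → ‖S0 v‖ ≤ C := by
    intro v hv
    have h1 : ‖g ⟨v, hv⟩‖ ≤ C := hC ⟨v, hv⟩
    have h2 : ‖S0 v‖ = ‖g ⟨v, hv⟩‖ := by
      rw [hg]
      exact ((NormedSpace.inclusionInDoubleDualLi ℂ (E := Y)).norm_map (S0 v)).symm
    rw [h2]; exact h1
  have hbound : ∀ v : G, ‖S1 v‖ ≤ max C 0 * ‖v‖ := by
    intro v
    rcases eq_or_ne v 0 with rfl | hv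
    · simp
    · have hnv : (0:ℝ) < ‖v‖ := norm_pos_iff.mpr hv
      set c : ℂ := (‖v‖ : ℂ) with hc
      have hcne : c ≠ 0 := by
        simp [hc, Complex.ofReal_ne_zero, ne_of_gt hnv]
      set w : G := c⁻¹ • v with hw
      have hwn : ‖w‖ ≤ 1 := by
        rw [hw, norm_smul, norm_inv, hc, Complex.norm_real, Real.norm_eq_abs,
          abs_of_pos hnv, inv_mul_cancel₀ (ne_of_gt hnv)]
      have hsplit : S1 v = c • S1 w := by
        rw [hw, map_smul, smul_smul, mul_inv_cancel₀ hcne, one_smul]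
      rw [hsplit, norm_smul, hc, Complex.norm_real, Real.norm_eq_abs, abs_of_pos hnv, mul_comm]
      have : ‖S1 w‖ ≤ max C 0 := le_trans (hnorm w hwn) (le_max_left _ _)
      exact mul_le_mul_of_nonneg_right this (le_of_lt hnv)
  refine ⟨S1.mkContinuous (max C 0) hbound, fun v φ => (hS0 v φ).symm⟩


/-- f ↦ f^t is an isometric isomorphism from HL₀(B_X, Y) onto the space
of weak*-to-weak* continuous linear operators from Y* into HL₀(B_X).  Here HL₀(B_X)
is identified, via the canonical isometric isomorphism Λ_X (g ↦ T_g, hypothesized by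
linC together with its universal and isometry properties), with the dual of G₀(B_X),
which induces its weak* topology.  The statement asserts: every f^t is w*-w*
continuous; the map is isometric (the operator norm of f^t equals L(f)); it is
injective; and it is surjective onto all w*-w* continuous linear operators. -/
theorem transpose_isometric_iso_weakstar {X Y G : Type*}
    [NormedAddCommGroup X] [NormedSpace ℂ X] [CompleteSpace X]
    [NormedAddCommGroup Y] [NormedSpace ℂ Y] [CompleteSpace Y]
    [NormedAddCommGroup G] [NormedSpace ℂ G] [CompleteSpace G]
    (δX : X → G) (hδ : MemHL δX)
    (hdense : Dense (Submodule.span ℂ (δX '' ball (0 : X) 1) : Set G))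
    (linC : (X → ℂ) → (G →L[ℂ] ℂ))
    (hlinC : ∀ g : X → ℂ, MemHL g → ∀ x ∈ ball (0 : X) 1, linC g (δX x) = g x)
    (hlinCnorm : ∀ g : X → ℂ, MemHL g → ‖linC g‖ = LipNorm g) :
    (∀ f : X → Y, MemHL f →
        Continuous fun φ : WeakDual ℂ Y => toWD (linC (fun x => φ (f x)))) ∧
    (∀ f : X → Y, MemHL f →
        sSup {r : ℝ | ∃ φ : Y →L[ℂ] ℂ, ‖φ‖ ≤ 1 ∧ r = ‖linC (fun x => φ (f x))‖}
          = LipNorm f) ∧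
    (∀ f g : X → Y, MemHL f → MemHL g →
        (∀ φ : Y →L[ℂ] ℂ, linC (fun x => φ (f x)) = linC (fun x => φ (g x))) →
        EqOn f g (ball (0 : X) 1)) ∧
    (∀ u : (Y →L[ℂ] ℂ) →ₗ[ℂ] (G →L[ℂ] ℂ),
        (Continuous fun φ : WeakDual ℂ Y => toWD (u (φ : Y →L[ℂ] ℂ))) →
        ∃ f : X → Y, MemHL f ∧ ∀ φ : Y →L[ℂ] ℂ, u φ = linC (fun x => φ (f x))) := by
  refine ⟨?_, ?_, ?_, ?_⟩
  -- Part 1: weak*-to-weak* continuity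
  · intro f hf
    apply WeakDual.continuous_of_continuous_eval
    intro v
    obtain ⟨y, hy⟩ := keyA δX hdense linC hlinC hlinCnorm f hf v
    have heq : (fun φ : WeakDual ℂ Y => toWD (linC (fun x => φ (f x))) v)
        = fun φ : WeakDual ℂ Y => (φ : Y →L[ℂ] ℂ) y := by
      funext φ
      exact hy (φ : Y →L[ℂ] ℂ)
    show Continuous (fun φ : WeakDual ℂ Y => toWD (linC (fun x => φ (f x))) v)
    rw [heq]
    exact WeakDual.eval_continuous y
  -- Part 2: isometry
  · intro f hf
    have hub : ∀ r ∈ {r : ℝ | ∃ φ : Y →L[ℂ] ℂ, ‖φ‖ ≤ 1 ∧ r = ‖linC (fun x => φ (f x))‖},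
        r ≤ LipNorm f := by
      rintro r ⟨φ, hφ, rfl⟩
      rw [hlinCnorm _ (memHL_comp_clm hf φ)]
      calc LipNorm (fun x => φ (f x)) ≤ ‖φ‖ * LipNorm f := lipNorm_comp_le hf φ
      _ ≤ 1 * LipNorm f := mul_le_mul_of_nonneg_right hφ (lipNorm_nonneg f)
      _ = LipNorm f := one_mul _
    have hbdd : BddAbove {r : ℝ | ∃ φ : Y →L[ℂ] ℂ, ‖φ‖ ≤ 1 ∧ r = ‖linC (fun x => φ (f x))‖} :=
      ⟨LipNorm f, hub⟩
    have hSnn : (0:ℝ) ≤ sSup {r : ℝ | ∃ φ : Y →L[ℂ] ℂ, ‖φ‖ ≤ 1 ∧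
        r = ‖linC (fun x => φ (f x))‖} := by
      apply Real.sSup_nonneg
      rintro r ⟨φ, hφ, rfl⟩
      exact norm_nonneg _
    apply le_antisymm
    · exact Real.sSup_le hub (lipNorm_nonneg f)
    · apply Real.sSup_le _ hSnn
      rintro r ⟨p, ⟨h1, h2, h3⟩, rfl⟩
      obtain ⟨φ, hφ1, hφ2⟩ := exists_dual_vector'' ℂ (f p.1 - f p.2)
      have hnorm : ‖φ (f p.1) - φ (f p.2)‖ = ‖f p.1 - f p.2‖ := by
        rw [← map_sub, hφ2]
        simp
      have hratio : ‖f p.1 - f p.2‖ / ‖p.1 - p.2‖ ≤ LipNorm (fun x => φ (f x)) := by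
        have hmem : ‖φ (f p.1) - φ (f p.2)‖ / ‖p.1 - p.2‖ ≤ LipNorm (fun x => φ (f x)) :=
          ratio_le_lipNorm (memHL_comp_clm hf φ) h1 h2 h3
        rwa [hnorm] at hmem
      calc ‖f p.1 - f p.2‖ / ‖p.1 - p.2‖ ≤ LipNorm (fun x => φ (f x)) := hratio
      _ = ‖linC (fun x => φ (f x))‖ := (hlinCnorm _ (memHL_comp_clm hf φ)).symm
      _ ≤ _ := le_csSup hbdd ⟨φ, hφ1, rfl⟩
  -- Part 3: injectivity
  · intro f g hf hg h x hx
    have hφ : ∀ φ : Y →L[ℂ] ℂ, φ (f x) = φ (g x) := by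
      intro φ
      have h1 : linC (fun x => φ (f x)) (δX x) = φ (f x) :=
        hlinC _ (memHL_comp_clm hf φ) x hx
      have h2 : linC (fun x => φ (g x)) (δX x) = φ (g x) :=
        hlinC _ (memHL_comp_clm hg φ) x hx
      rw [← h1, ← h2, h φ]
    have hz : ∀ φ : StrongDual ℂ Y, φ (f x - g x) = 0 := by
      intro φ
      rw [map_sub, hφ φ, sub_self]
    have := NormedSpace.eq_zero_of_forall_dual_eq_zero ℂ hz
    rwa [sub_eq_zero] at this
  -- Part 4: surjectivity
  · intro u hu
    obtain ⟨S, hS⟩ := keyS u hu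
    obtain ⟨Cδ, hCδ⟩ := hδ.2.2
    have hfHL : MemHL (fun x => S (δX x)) := by
      refine ⟨?_, ?_, ⟨‖S‖ * Cδ, ?_⟩⟩
      · show S (δX 0) = 0
        rw [hδ.1, map_zero]
      · exact S.differentiable.comp_differentiableOn hδ.2.1
      · intro x hx y hy
        calc ‖S (δX x) - S (δX y)‖ = ‖S (δX x - δX y)‖ := by rw [map_sub]
        _ ≤ ‖S‖ * ‖δX x - δX y‖ := S.le_opNorm _
        _ ≤ ‖S‖ * (Cδ * ‖x - y‖) := mul_le_mul_of_nonneg_left (hCδ x hx y hy) (norm_nonneg _)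
        _ = ‖S‖ * Cδ * ‖x - y‖ := by ring
    refine ⟨fun x => S (δX x), hfHL, fun φ => ?_⟩
    apply ContinuousLinearMap.ext_on hdense
    rintro v ⟨x, hx, rfl⟩
    rw [hlinC _ (memHL_comp_clm hfHL φ) x hx]
    exact (hS (δX x) φ).symm
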